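/- Let R be a commutative ring with identity, I an ideal of R, and P an I-prime ideal of R which is not a prime ideal. Then √P = √(I·P), where √J denotes the radical of the ideal J. -/

import Mathlib

/-- A proper ideal `P` of a commutative ring `R` is `I`-prime if whenever
`a * b ∈ P \ I*P`, then `a ∈ P` or `b ∈ P`. -/
def IsIPrime {R : Type*} [CommRing R] (I P : Ideal R) : Prop :=
  P ≠ ⊤ ∧ ∀ a b : R, a * b ∈ P → a * b ∉ I * P → a ∈ P ∨ b ∈ P

/-- A proper ideal `Q` is weakly prime if whenever `a * b ∈ Q \ {0}`,
then `a ∈ Q` or `b ∈ Q`. -/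
def IsWeaklyPrime {R : Type*} [CommRing R] (Q : Ideal R) : Prop :=
  Q ≠ ⊤ ∧ ∀ a b : R, a * b ∈ Q → a * b ≠ 0 → a ∈ Q ∨ b ∈ Q

theorem stmt_5 {R : Type*} [CommRing R] (I P : Ideal R) (hP : IsIPrime I P)
    (hnp : ¬ P.IsPrime) : P.radical = (I * P).radical := by
  obtain ⟨hne, hIP⟩ := hP
  have hex : ∃ a b : R, a * b ∈ P ∧ a ∉ P ∧ b ∉ P := by
    by_contra h
    push_neg at h
    exact hnp ⟨hne, fun {a b} hab => or_iff_not_imp_left.mpr (fun ha => h a b hab ha)⟩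
  obtain ⟨a, b, hab, ha, hb⟩ := hex
  have habI : a * b ∈ I * P := by
    by_contra h
    rcases hIP a b hab h with h' | h' <;> [exact ha h'; exact hb h']
  have haP : ∀ p ∈ P, a * p ∈ I * P := by
    intro p hp
    have h1 : a * (b + p) ∈ P := by
      rw [mul_add]; exact add_mem hab (Ideal.mul_mem_left _ _ hp)
    have h2 : a * (b + p) ∈ I * P := by
      by_contra h
      rcases hIP a (b + p) h1 h with h' | h'
      · exact ha h'
      · exact hb (by simpa using sub_mem h' hp)
    have h3 := sub_mem h2 habI
    have : a * (b + p) - a * b = a * p := by ring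
    rwa [this] at h3
  have hbP : ∀ p ∈ P, b * p ∈ I * P := by
    intro p hp
    have h1 : b * (a + p) ∈ P := by
      rw [mul_add, mul_comm b a]; exact add_mem hab (Ideal.mul_mem_left _ _ hp)
    have h2 : b * (a + p) ∈ I * P := by
      by_contra h
      rcases hIP b (a + p) h1 h with h' | h'
      · exact hb h'
      · exact ha (by simpa using sub_mem h' hp)
    have h3 := sub_mem h2 (show b * a ∈ I * P by rwa [mul_comm b a])
    have : b * (a + p) - b * a = b * p := by ring
    rwa [this] at h3
  have hPP : ∀ p ∈ P, ∀ q ∈ P, p * q ∈ I * P := by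
    intro p hp q hq
    have h1 : (a + p) * (b + q) ∈ P := by
      have e : (a + p) * (b + q) = a * b + (a * q + (p * b + p * q)) := by ring
      rw [e]
      exact add_mem hab (add_mem (Ideal.mul_mem_left _ _ hq)
        (add_mem (Ideal.mul_mem_right _ _ hp) (Ideal.mul_mem_left _ _ hq)))
    have h2 : (a + p) * (b + q) ∈ I * P := by
      by_contra h
      rcases hIP _ _ h1 h with h' | h'
      · exact ha (by simpa using sub_mem h' hp)
      · exact hb (by simpa using sub_mem h' hq)
    have h3 := sub_mem (sub_mem (sub_mem h2 habI) (haP q hq)) (hbP p hp)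
    have e : (a + p) * (b + q) - a * b - a * q - b * p = p * q := by ring
    rwa [e] at h3
  apply le_antisymm
  · have hle : P ≤ (I * P).radical := fun x hx => ⟨2, by simpa [sq] using hPP x hx x hx⟩
    calc P.radical ≤ ((I * P).radical).radical := Ideal.radical_mono hle
      _ = (I * P).radical := Ideal.radical_idem _
  · exact Ideal.radical_mono (Ideal.mul_le.mpr (fun r _ s hs => Ideal.mul_mem_left _ r hs))
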